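/- Let n ≥ 2, let σ denote the surface measure on the unit sphere S^{n-1} ⊆ ℝ^n, and let m_n(ξ) = ∫_{S^{n-1}} exp(⟨y,ξ⟩) dσ(y) for ξ ∈ ℝ^n. Then for every z, w ∈ ℂ^n with ‖Im z + Im w‖ < 2, the function ξ ↦ exp(i (z − w̄)⋅ξ) / m_n(2ξ) is Lebesgue integrable on ℝ^n, where for u ∈ ℂ^n and ξ ∈ ℝ^n we write u⋅ξ = Σ_j u_j ξ_j (bilinear pairing) and w̄ is the componentwise complex conjugate. -/

import Mathlib

open MeasureTheory Metric RealInnerProductSpace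
open MeasureTheory Metric RealInnerProductSpace Module
open scoped ENNReal NNReal

noncomputable section SzegoAux
namespace SzegoAux

variable {m : ℕ}

lemma norm_sq_eq (x : EuclideanSpace ℝ (Fin m)) : ‖x‖ ^ 2 = ∑ i, x i ^ 2 := by
  rw [EuclideanSpace.norm_eq, Real.sq_sqrt (by positivity)]
  simp [sq_abs]

lemma haarEm : (μH[(m:ℝ)] : Measure (EuclideanSpace ℝ (Fin m))).IsAddHaarMeasure := by
  have := isAddHaarMeasure_hausdorffMeasure (E := EuclideanSpace ℝ (Fin m))
  rwa [finrank_euclideanSpace_fin] at this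

lemma ball_lt_top (R : ℝ) :
    μH[(m:ℝ)] (closedBall (0 : EuclideanSpace ℝ (Fin m)) R) < ∞ := by
  haveI := haarEm (m := m)
  exact (isCompact_closedBall _ _).measure_lt_top

lemma ball_pos {ρ : ℝ} (hρ : 0 < ρ) :
    0 < μH[(m:ℝ)] (closedBall (0 : EuclideanSpace ℝ (Fin m)) ρ) := by
  haveI := haarEm (m := m)
  exact lt_of_lt_of_le (measure_ball_pos _ (0 : EuclideanSpace ℝ (Fin m)) hρ)
    (measure_mono ball_subset_closedBall)

/-- interpret a plain tuple as a point of Euclidean space -/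
def toE {k : ℕ} (f : Fin k → ℝ) : EuclideanSpace ℝ (Fin k) := (WithLp.equiv 2 _).symm f

@[simp] lemma toE_apply {k : ℕ} (f : Fin k → ℝ) (i : Fin k) : toE f i = f i := rfl

/-- graph map -/
def FF (j : Fin (m+1)) (s : ℝ) (x : EuclideanSpace ℝ (Fin m)) :
    EuclideanSpace ℝ (Fin (m+1)) :=
  toE (Fin.insertNth j (s * Real.sqrt (1 - ‖x‖ ^ 2)) (fun i => x i))

lemma dist_insertNth (j : Fin (m+1)) (a b : ℝ) (u v : EuclideanSpace ℝ (Fin m)) :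
    dist (toE (Fin.insertNth j a (fun i => u i)))
      (toE (Fin.insertNth j b (fun i => v i))) ^ 2 = dist a b ^ 2 + dist u v ^ 2 := by
  simp only [EuclideanSpace.dist_eq]
  rw [Real.sq_sqrt (by positivity), Real.sq_sqrt (by positivity),
    Fin.sum_univ_succAbove _ j]
  simp [Fin.insertNth_apply_same, Fin.insertNth_apply_succAbove, Real.dist_eq]

lemma norm_insertNth (j : Fin (m+1)) (a : ℝ) (u : EuclideanSpace ℝ (Fin m)) :
    ‖toE (Fin.insertNth j a (fun i => u i))‖ ^ 2 = a ^ 2 + ‖u‖ ^ 2 := by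
  rw [norm_sq_eq, norm_sq_eq, Fin.sum_univ_succAbove _ j]
  simp [Fin.insertNth_apply_same, Fin.insertNth_apply_succAbove]

/-- the radius used for the covering -/
def rr (m : ℕ) : ℝ := Real.sqrt (1 - 1/(m+1))

lemma rr_sq : rr m ^ 2 = 1 - 1/(m+1) := by
  rw [rr, Real.sq_sqrt]
  have : (1:ℝ)/(m+1) ≤ 1 := by
    rw [div_le_one (by positivity)]; linarith [Nat.cast_nonneg (α := ℝ) m]
  linarith

lemma sqrt_lip {a u v : ℝ} (ha : 0 < a) (hu : a ≤ u) (hv : a ≤ v) :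
    |Real.sqrt u - Real.sqrt v| ≤ |u - v| / (2 * Real.sqrt a) := by
  have hsu : Real.sqrt a ≤ Real.sqrt u := Real.sqrt_le_sqrt hu
  have hsv : Real.sqrt a ≤ Real.sqrt v := Real.sqrt_le_sqrt hv
  have hsa : 0 < Real.sqrt a := Real.sqrt_pos.2 ha
  have key : (Real.sqrt u - Real.sqrt v) * (Real.sqrt u + Real.sqrt v) = u - v := by
    have h1 : Real.sqrt u ^ 2 = u := Real.sq_sqrt (le_trans ha.le hu)
    have h2 : Real.sqrt v ^ 2 = v := Real.sq_sqrt (le_trans ha.le hv)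
    ring_nf
    nlinarith [h1, h2]
  have hpos : 0 < Real.sqrt u + Real.sqrt v := by linarith
  rw [le_div_iff₀ (by positivity)]
  have habs : |u - v| = |Real.sqrt u - Real.sqrt v| * (Real.sqrt u + Real.sqrt v) := by
    rw [← key, abs_mul, abs_of_pos hpos]
  nlinarith [abs_nonneg (Real.sqrt u - Real.sqrt v)]

lemma rr_nonneg : 0 ≤ rr m := Real.sqrt_nonneg _

lemma rr_le_one : rr m ≤ 1 := by
  rw [rr]
  have h0 : (0:ℝ) ≤ 1/((m:ℝ)+1) := by positivity
  have h := Real.sqrt_le_sqrt (show 1 - 1/((m:ℝ)+1) ≤ 1 by linarith)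
  simpa using h

lemma g_lip {x y : EuclideanSpace ℝ (Fin m)} (hx : ‖x‖ ≤ rr m) (hy : ‖y‖ ≤ rr m) :
    |Real.sqrt (1 - ‖x‖^2) - Real.sqrt (1 - ‖y‖^2)| ≤ Real.sqrt (m+1) * dist x y := by
  have ha : (0:ℝ) < 1/(m+1) := by positivity
  have hu : 1/((m:ℝ)+1) ≤ 1 - ‖x‖^2 := by
    have := pow_le_pow_left₀ (norm_nonneg x) hx 2
    rw [rr_sq] at this; push_cast at this ⊢; linarith
  have hv : 1/((m:ℝ)+1) ≤ 1 - ‖y‖^2 := by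
    have := pow_le_pow_left₀ (norm_nonneg y) hy 2
    rw [rr_sq] at this; push_cast at this ⊢; linarith
  have key := sqrt_lip (by exact_mod_cast ha) hu hv
  have h2 : |(1 - ‖x‖^2) - (1 - ‖y‖^2)| ≤ 2 * dist x y := by
    have e1 : (1 - ‖x‖^2) - (1 - ‖y‖^2) = (‖y‖+‖x‖) * (‖y‖-‖x‖) := by ring
    have e2 : |‖y‖-‖x‖| ≤ dist x y := by
      rw [dist_comm, dist_eq_norm]; exact abs_norm_sub_norm_le y x
    have e3 : ‖y‖+‖x‖ ≤ 2 := by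
      have := rr_le_one (m := m); linarith
    rw [e1, abs_mul, abs_of_nonneg (by positivity)]
    calc (‖y‖+‖x‖) * |‖y‖-‖x‖| ≤ 2 * |‖y‖-‖x‖| :=
          mul_le_mul_of_nonneg_right e3 (abs_nonneg _)
      _ ≤ 2 * dist x y := by linarith
  have hsq : Real.sqrt (1/((m:ℝ)+1)) = (Real.sqrt ((m:ℝ)+1))⁻¹ := by
    rw [one_div, Real.sqrt_inv]
  have hpos : (0:ℝ) < Real.sqrt ((m:ℝ)+1) := Real.sqrt_pos.2 (by positivity)
  calc |Real.sqrt (1 - ‖x‖^2) - Real.sqrt (1 - ‖y‖^2)|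
      ≤ |(1 - ‖x‖^2) - (1 - ‖y‖^2)| / (2 * Real.sqrt (1/((m:ℝ)+1))) := by
        convert key using 3 <;> push_cast <;> ring
    _ ≤ (2 * dist x y) / (2 * Real.sqrt (1/((m:ℝ)+1))) := by
        have hp : (0:ℝ) < Real.sqrt (1/((m:ℝ)+1)) := Real.sqrt_pos.2 ha
        gcongr
    _ = Real.sqrt ((m:ℝ)+1) * dist x y := by
        rw [hsq]; field_simp

lemma lipFF (j : Fin (m+1)) (s : ℝ) (hs : s^2 = 1) :
    LipschitzOnWith (Real.toNNReal (Real.sqrt (m+2))) (FF j s) (closedBall 0 (rr m)) := by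
  apply LipschitzOnWith.of_dist_le_mul
  intro x hx y hy
  rw [mem_closedBall, dist_zero_right] at hx hy
  have hg := g_lip hx hy
  have hd2 : dist (FF j s x) (FF j s y)^2 ≤ ((m:ℝ)+2) * dist x y^2 := by
    rw [FF, FF, dist_insertNth, Real.dist_eq]
    have : |s * Real.sqrt (1 - ‖x‖^2) - s * Real.sqrt (1 - ‖y‖^2)|
        = |s| * |Real.sqrt (1 - ‖x‖^2) - Real.sqrt (1 - ‖y‖^2)| := by
      rw [← abs_mul]; ring_nf
    have habs : |s| = 1 := by
      have : |s|^2 = 1 := by rw [sq_abs]; exact hs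
      nlinarith [abs_nonneg s]
    rw [this, habs, one_mul]
    nlinarith [dist_nonneg (x := x) (y := y), abs_nonneg (Real.sqrt (1 - ‖x‖^2) - Real.sqrt (1 - ‖y‖^2)), hg,
      Real.sq_sqrt (show (0:ℝ) ≤ (m:ℝ)+1 by positivity),
      Real.sqrt_nonneg ((m:ℝ)+1)]
  have hfin : dist (FF j s x) (FF j s y) ≤ Real.sqrt ((m:ℝ)+2) * dist x y := by
    have h2 := Real.sqrt_le_sqrt hd2
    rwa [Real.sqrt_sq dist_nonneg, Real.sqrt_mul (by positivity), Real.sqrt_sq dist_nonneg] at h2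
  calc dist (FF j s x) (FF j s y) ≤ Real.sqrt ((m:ℝ)+2) * dist x y := hfin
    _ = (Real.toNNReal (Real.sqrt (m+2)) : ℝ) * dist x y := by
        rw [Real.coe_toNNReal _ (Real.sqrt_nonneg _)]

lemma sphere_cover :
    sphere (0 : EuclideanSpace ℝ (Fin (m+1))) 1 ⊆
      ⋃ (j : Fin (m+1)) (s : Bool), FF j (cond s 1 (-1)) '' closedBall 0 (rr m) := by
  intro y hy
  have hy1 : ‖y‖ = 1 := by simpa using hy
  have hsum : ∑ k, y k ^ 2 = 1 := by rw [← norm_sq_eq y, hy1]; norm_num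
  obtain ⟨j, hj⟩ : ∃ j, 1/((m:ℝ)+1) ≤ y j ^ 2 := by
    by_contra hcon
    push_neg at hcon
    have hlt := Finset.sum_lt_sum_of_nonempty (Finset.univ_nonempty (α := Fin (m+1)))
      (g := fun _ => 1/((m:ℝ)+1)) (fun k _ => hcon k)
    rw [hsum, Finset.sum_const, Finset.card_univ, Fintype.card_fin, nsmul_eq_mul] at hlt
    have : ((m:ℝ)+1) ≠ 0 := by positivity
    push_cast at hlt
    field_simp at hlt
    exact lt_irrefl _ hlt
  set x : EuclideanSpace ℝ (Fin m) := toE (fun i => y (j.succAbove i)) with hxdef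
  have hx2 : ‖x‖^2 = 1 - y j ^ 2 := by
    rw [norm_sq_eq]
    have := Fin.sum_univ_succAbove (fun k => y k ^ 2) j
    rw [hsum] at this
    simp only [hxdef, toE_apply]
    linarith
  have hxr : ‖x‖ ≤ rr m := by
    have h1 : ‖x‖^2 ≤ rr m ^2 := by rw [hx2, rr_sq]; push_cast; linarith
    have := Real.sqrt_le_sqrt h1
    rwa [Real.sqrt_sq (norm_nonneg x), Real.sqrt_sq rr_nonneg] at this
  have hg : Real.sqrt (1 - ‖x‖^2) = |y j| := by
    rw [hx2]; ring_nf; rw [Real.sqrt_sq_eq_abs]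
  set s : Bool := decide (0 ≤ y j) with hsdef
  have hsg : cond s 1 (-1) * Real.sqrt (1 - ‖x‖^2) = y j := by
    rw [hg, hsdef]
    by_cases h0 : 0 ≤ y j
    · simp [h0, abs_of_nonneg h0]
    · simp [h0, abs_of_neg (lt_of_not_ge h0)]
  apply Set.mem_iUnion.2
  refine ⟨j, Set.mem_iUnion.2 ⟨s, ⟨x, ?_, ?_⟩⟩⟩
  · rw [mem_closedBall, dist_zero_right]; exact hxr
  · show FF j (cond s 1 (-1)) x = y
    rw [FF, hsg]
    have htail : (fun i => x i) = j.removeNth (fun k => y k) := by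
      funext i; simp [hxdef, Fin.removeNth]
    rw [htail]
    exact congrArg toE (Fin.insertNth_self_removeNth j (fun k => y k))

lemma sphere_lt_top :
    μH[(m:ℝ)] (sphere (0 : EuclideanSpace ℝ (Fin (m+1))) 1) < ∞ := by
  refine lt_of_le_of_lt (measure_mono sphere_cover) ?_
  refine lt_of_le_of_lt (measure_iUnion_le _) ?_
  rw [tsum_fintype]
  refine ENNReal.sum_lt_top.2 fun j _ => ?_
  refine lt_of_le_of_lt (measure_iUnion_le _) ?_
  rw [tsum_fintype]
  refine ENNReal.sum_lt_top.2 fun b _ => ?_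
  have hb : (cond b (1:ℝ) (-1))^2 = 1 := by cases b <;> norm_num
  refine lt_of_le_of_lt ((lipFF j _ hb).hausdorffMeasure_image_le (Nat.cast_nonneg m)) ?_
  exact ENNReal.mul_lt_top
    (ENNReal.rpow_lt_top_of_nonneg (Nat.cast_nonneg m) ENNReal.coe_ne_top)
    (ball_lt_top (rr m))

lemma cap_image (t : ℝ) (v : EuclideanSpace ℝ (Fin (m+1))) (hv : ‖v‖ = 1) :
    μH[(m:ℝ)] (sphere (0 : EuclideanSpace ℝ (Fin (m+1))) 1 ∩ {y | t ≤ ⟪v, y⟫}) =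
    μH[(m:ℝ)] (sphere (0 : EuclideanSpace ℝ (Fin (m+1))) 1 ∩
      {y | t ≤ ⟪EuclideanSpace.single (0 : Fin (m+1)) (1:ℝ), y⟫}) := by
  set e₀ := EuclideanSpace.single (0 : Fin (m+1)) (1:ℝ) with he₀
  have he : ‖e₀‖ = 1 := by simp [he₀]
  set R := Submodule.reflection (ℝ ∙ (e₀ - v))ᗮ with hRdef
  have hR : R e₀ = v := Submodule.reflection_sub (by rw [he, hv])
  have himg : sphere (0 : EuclideanSpace ℝ (Fin (m+1))) 1 ∩ {y | t ≤ ⟪v, y⟫}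
      = R '' (sphere 0 1 ∩ {y | t ≤ ⟪e₀, y⟫}) := by
    ext u
    constructor
    · rintro ⟨hu1, hu2⟩
      refine ⟨R.symm u, ⟨?_, ?_⟩, by simp⟩
      · rw [mem_sphere_zero_iff_norm, LinearIsometryEquiv.norm_map]
        exact mem_sphere_zero_iff_norm.1 hu1
      · show t ≤ ⟪e₀, R.symm u⟫
        have h1 : ⟪R e₀, R (R.symm u)⟫ = ⟪e₀, R.symm u⟫ := R.inner_map_map _ _
        rw [← h1, hR, LinearIsometryEquiv.apply_symm_apply]
        exact hu2
    · rintro ⟨y, ⟨hy1, hy2⟩, rfl⟩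
      constructor
      · rw [mem_sphere_zero_iff_norm, LinearIsometryEquiv.norm_map]
        exact mem_sphere_zero_iff_norm.1 hy1
      · show t ≤ ⟪v, R y⟫
        have h1 : ⟪R e₀, R y⟫ = ⟪e₀, y⟫ := R.inner_map_map _ _
        rw [← hR, h1]
        exact hy2
  rw [himg, (R.isometry).hausdorffMeasure_image (Or.inl (by positivity))]

lemma cap_pos {t : ℝ} (ht0 : 0 ≤ t) (ht1 : t < 1) :
    0 < μH[(m:ℝ)] (sphere (0 : EuclideanSpace ℝ (Fin (m+1))) 1 ∩
      {y | t ≤ ⟪EuclideanSpace.single (0 : Fin (m+1)) (1:ℝ), y⟫}) := by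
  set e₀ := EuclideanSpace.single (0 : Fin (m+1)) (1:ℝ) with he₀
  set cap := sphere (0 : EuclideanSpace ℝ (Fin (m+1))) 1 ∩ {y | t ≤ ⟪e₀, y⟫} with hcap
  set ρ := Real.sqrt (1 - t^2) with hρ
  have hρsq : ρ^2 = 1 - t^2 := Real.sq_sqrt (by nlinarith)
  have hρpos : 0 < ρ := Real.sqrt_pos.2 (by nlinarith)
  have hρ1 : ρ ≤ 1 := by
    have := Real.sqrt_le_sqrt (show 1 - t^2 ≤ 1 by nlinarith)
    simpa [hρ] using this
  set π : EuclideanSpace ℝ (Fin (m+1)) → EuclideanSpace ℝ (Fin m) :=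
    fun y => toE (fun i => y ((0:Fin (m+1)).succAbove i)) with hπdef
  have hπ : LipschitzWith 1 π := by
    apply LipschitzWith.of_dist_le_mul
    intro y y'
    rw [NNReal.coe_one, one_mul, EuclideanSpace.dist_eq, EuclideanSpace.dist_eq]
    apply Real.sqrt_le_sqrt
    rw [Fin.sum_univ_succAbove (fun k => dist (y k) (y' k) ^ 2) (0 : Fin (m+1))]
    simp only [hπdef, toE_apply]
    have h0 : (0:ℝ) ≤ dist (y 0) (y' 0) ^ 2 := by positivity
    linarith
  have hsub : closedBall (0 : EuclideanSpace ℝ (Fin m)) ρ ⊆ π '' cap := by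
    intro x hx
    rw [mem_closedBall, dist_zero_right] at hx
    have hx1 : ‖x‖ ≤ 1 := hx.trans hρ1
    have hxsq : ‖x‖^2 ≤ ρ^2 := by nlinarith [norm_nonneg x]
    have hgx : Real.sqrt (1 - ‖x‖^2) ^ 2 = 1 - ‖x‖^2 := Real.sq_sqrt (by nlinarith)
    refine ⟨FF 0 1 x, ⟨?_, ?_⟩, ?_⟩
    · rw [mem_sphere_zero_iff_norm]
      have h2 : ‖FF 0 1 x‖^2 = 1 := by
        rw [FF, norm_insertNth, one_mul, hgx]; ring
      nlinarith [norm_nonneg (FF 0 1 x)]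
    · show t ≤ ⟪e₀, FF 0 1 x⟫
      have hi : ⟪e₀, FF 0 1 x⟫ = FF 0 1 x 0 := by
        simp [he₀, EuclideanSpace.inner_single_left]
      have happ : FF 0 1 x 0 = 1 * Real.sqrt (1 - ‖x‖^2) := by
        rw [FF, toE_apply]
        exact Fin.insertNth_apply_same 0 _ _
      rw [hi, happ, one_mul]
      have : t = Real.sqrt (t^2) := (Real.sqrt_sq ht0).symm
      rw [this]
      apply Real.sqrt_le_sqrt
      nlinarith
    · show π (FF 0 1 x) = x
      have htail : (fun i => (FF 0 1 x) ((0 : Fin (m+1)).succAbove i)) = fun i => x i := by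
        funext i
        rw [FF, toE_apply, Fin.insertNth_apply_succAbove]
      calc π (FF 0 1 x) = toE (fun i => x i) := congrArg toE htail
        _ = x := rfl
  have h1 : μH[(m:ℝ)] (closedBall (0 : EuclideanSpace ℝ (Fin m)) ρ) ≤ μH[(m:ℝ)] (π '' cap) :=
    measure_mono hsub
  have h2 := hπ.hausdorffMeasure_image_le (show (0:ℝ) ≤ (m:ℝ) from Nat.cast_nonneg m) cap
  rw [ENNReal.coe_one, ENNReal.one_rpow, one_mul] at h2
  exact lt_of_lt_of_le (ball_pos hρpos) (h1.trans h2)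

end SzegoAux

open SzegoAux Set

/-- **Absolute convergence of the Szegő kernel integral of the tube** `ℝ^n × B(0,1)`:
if `‖Im z + Im w‖ < 2` then `ξ ↦ exp(i (z − w̄)⋅ξ) / m_n(2ξ)` is Lebesgue integrable on
`ℝ^n`, where `m_n(ξ) = ∫_{S^{n-1}} exp(⟨y,ξ⟫) dσ(y)` and `σ` is the surface measure on
the unit sphere. -/
theorem stmt_2 (n : ℕ) (hn : 2 ≤ n)
    (m : EuclideanSpace ℝ (Fin n) → ℝ)
    (hm : ∀ ξ, m ξ =
      ∫ y in sphere (0 : EuclideanSpace ℝ (Fin n)) 1,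
        Real.exp ⟪y, ξ⟫ ∂(μH[(n : ℝ) - 1]))
    (z w : Fin n → ℂ)
    (hzw : ‖(show EuclideanSpace ℝ (Fin n) from WithLp.toLp 2 fun j => (z j).im + (w j).im)‖ < 2) :
    Integrable (fun ξ : EuclideanSpace ℝ (Fin n) =>
      Complex.exp (Complex.I * ∑ j, (z j - starRingEnd ℂ (w j)) * (ξ j : ℂ))
        / (m ((2 : ℝ) • ξ) : ℂ)) := by
  obtain ⟨mm, rfl⟩ : ∃ mm, n = mm + 1 := ⟨n - 1, by omega⟩
  have hexp : ((mm + 1 : ℕ) : ℝ) - 1 = (mm : ℝ) := by push_cast; ring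
  rw [hexp] at hm
  set a : (EuclideanSpace ℝ (Fin (mm + 1))) := (show (EuclideanSpace ℝ (Fin (mm + 1))) from WithLp.toLp 2 fun j => (z j).im + (w j).im) with ha
  have ha0 : (0:ℝ) ≤ ‖a‖ := norm_nonneg a
  have hzw' : ‖a‖ < 2 := hzw
  set t : ℝ := 1 - (2 - ‖a‖) / 4 with htdef
  have ht0 : 0 ≤ t := by rw [htdef]; linarith
  have ht1 : t < 1 := by rw [htdef]; linarith
  set ε : ℝ := (2 - ‖a‖) / 2 with hεdef
  have hε : 0 < ε := by rw [hεdef]; linarith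
  have h2t : ‖a‖ - 2 * t = -ε := by rw [htdef, hεdef]; ring
  set e₀ : (EuclideanSpace ℝ (Fin (mm + 1))) := EuclideanSpace.single (0 : Fin (mm + 1)) (1 : ℝ) with he₀
  set cap0 : Set (EuclideanSpace ℝ (Fin (mm + 1))) := sphere (0 : (EuclideanSpace ℝ (Fin (mm + 1)))) 1 ∩ {y | t ≤ ⟪e₀, y⟫} with hcap0
  have hcap_fin : μH[(mm:ℝ)] cap0 < ⊤ :=
    lt_of_le_of_lt (measure_mono inter_subset_left) sphere_lt_top
  set c₀ : ℝ := (μH[(mm:ℝ)] cap0).toReal with hc₀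
  have hc₀pos : 0 < c₀ :=
    ENNReal.toReal_pos (cap_pos ht0 ht1).ne' hcap_fin.ne
  -- measurability of m
  have hm_meas : StronglyMeasurable m := by
    have hfun : m = fun ξ => ∫ y, Real.exp ⟪y, ξ⟫
        ∂((μH[(mm:ℝ)] : Measure (EuclideanSpace ℝ (Fin (mm + 1)))).restrict (sphere 0 1)) := funext fun ξ => hm ξ
    rw [hfun]
    haveI : IsFiniteMeasure ((μH[(mm:ℝ)] : Measure (EuclideanSpace ℝ (Fin (mm + 1)))).restrict (sphere 0 1)) :=
      ⟨by rw [Measure.restrict_apply_univ]; exact sphere_lt_top⟩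
    have hcont : Continuous fun p : (EuclideanSpace ℝ (Fin (mm + 1))) × (EuclideanSpace ℝ (Fin (mm + 1))) => Real.exp ⟪p.2, p.1⟫ :=
      Real.continuous_exp.comp (continuous_snd.inner continuous_fst)
    exact hcont.stronglyMeasurable.integral_prod_right'
  -- integrability on the sphere
  have hint_sphere : ∀ ξ : (EuclideanSpace ℝ (Fin (mm + 1))), IntegrableOn (fun y => Real.exp ⟪y, (2:ℝ) • ξ⟫)
      (sphere (0 : (EuclideanSpace ℝ (Fin (mm + 1)))) 1) (μH[(mm:ℝ)]) := by
    intro ξ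
    haveI : IsFiniteMeasure ((μH[(mm:ℝ)] : Measure (EuclideanSpace ℝ (Fin (mm + 1)))).restrict (sphere 0 1)) :=
      ⟨by rw [Measure.restrict_apply_univ]; exact sphere_lt_top⟩
    have hcont : Continuous fun y : (EuclideanSpace ℝ (Fin (mm + 1))) => Real.exp ⟪y, (2:ℝ) • ξ⟫ :=
      Real.continuous_exp.comp (continuous_id.inner continuous_const)
    refine Integrable.mono' (integrable_const (Real.exp (2 * ‖ξ‖)))
      hcont.aestronglyMeasurable ?_
    filter_upwards [ae_restrict_mem (isClosed_sphere.measurableSet)] with y hy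
    rw [Real.norm_eq_abs, abs_of_nonneg (Real.exp_nonneg _)]
    apply Real.exp_le_exp.2
    have h1 : ⟪y, (2:ℝ) • ξ⟫ ≤ ‖y‖ * ‖(2:ℝ) • ξ‖ := real_inner_le_norm _ _
    have h2 : ‖y‖ = 1 := mem_sphere_zero_iff_norm.1 hy
    have h3 : ‖(2:ℝ) • ξ‖ = 2 * ‖ξ‖ := by
      rw [norm_smul]; simp
    rw [h2, h3] at h1; linarith
  -- lower bound for m (2 • ξ)
  have hlow : ∀ ξ : (EuclideanSpace ℝ (Fin (mm + 1))), c₀ * Real.exp (2 * t * ‖ξ‖) ≤ m ((2:ℝ) • ξ) := by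
    intro ξ
    rw [hm]
    rcases eq_or_ne ξ 0 with h0 | h0
    · subst h0
      simp only [smul_zero, inner_zero_right, Real.exp_zero, norm_zero, mul_zero]
      rw [setIntegral_const]
      have hcap_le : (μH[(mm:ℝ)] cap0).toReal ≤ (μH[(mm:ℝ)] (sphere (0:(EuclideanSpace ℝ (Fin (mm + 1)))) 1)).toReal :=
        ENNReal.toReal_mono sphere_lt_top.ne (measure_mono inter_subset_left)
      rw [smul_eq_mul, mul_one]
      simpa [hc₀, Measure.real] using hcap_le
    · set v : (EuclideanSpace ℝ (Fin (mm + 1))) := ‖ξ‖⁻¹ • ξ with hv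
      have hvn : ‖v‖ = 1 := norm_smul_inv_norm h0
      set capv : Set (EuclideanSpace ℝ (Fin (mm + 1))) := sphere (0 : (EuclideanSpace ℝ (Fin (mm + 1)))) 1 ∩ {y | t ≤ ⟪v, y⟫} with hcapv
      have hμv : (μH[(mm:ℝ)] capv).toReal = c₀ := by
        rw [hcapv, hc₀, hcap0, cap_image t v hvn]
      have hcapv_meas : MeasurableSet capv := by
        apply isClosed_sphere.measurableSet.inter
        exact (isClosed_le continuous_const (continuous_const.inner continuous_id)).measurableSet
      have hcapv_fin : μH[(mm:ℝ)] capv ≠ ⊤ :=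
        (lt_of_le_of_lt (measure_mono inter_subset_left) sphere_lt_top).ne
      have hxpos : 0 < ‖ξ‖ := norm_pos_iff.2 h0
      have hpt : ∀ y ∈ capv, Real.exp (2 * t * ‖ξ‖) ≤ Real.exp ⟪y, (2:ℝ) • ξ⟫ := by
        intro y hy
        apply Real.exp_le_exp.2
        have hyv : t ≤ ⟪y, v⟫ := by
          rw [real_inner_comm]; exact hy.2
        have hiv : ⟪y, (2:ℝ) • ξ⟫ = 2 * (‖ξ‖ * ⟪y, v⟫) := by
          rw [real_inner_smul_right, hv, real_inner_smul_right]
          field_simp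
        rw [hiv]
        have := mul_le_mul_of_nonneg_left hyv hxpos.le
        nlinarith
      calc c₀ * Real.exp (2 * t * ‖ξ‖)
          = Real.exp (2 * t * ‖ξ‖) * (μH[(mm:ℝ)] capv).toReal := by rw [hμv]; ring
        _ ≤ ∫ y in capv, Real.exp ⟪y, (2:ℝ) • ξ⟫ ∂(μH[(mm:ℝ)]) := by
            have := setIntegral_ge_of_const_le_real hcapv_meas hcapv_fin hpt
              ((hint_sphere ξ).mono_set inter_subset_left)
            exact this
        _ ≤ ∫ y in sphere (0:(EuclideanSpace ℝ (Fin (mm + 1)))) 1, Real.exp ⟪y, (2:ℝ) • ξ⟫ ∂(μH[(mm:ℝ)]) := by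
            apply setIntegral_mono_set (hint_sphere ξ)
            · filter_upwards with y using Real.exp_nonneg _
            · exact HasSubset.Subset.eventuallyLE inter_subset_left
  have hmpos : ∀ ξ : (EuclideanSpace ℝ (Fin (mm + 1))), 0 < m ((2:ℝ) • ξ) := fun ξ =>
    lt_of_lt_of_le (by positivity) (hlow ξ)
  -- measurability of the integrand
  have hmeasf : AEStronglyMeasurable (fun ξ : (EuclideanSpace ℝ (Fin (mm + 1))) =>
      Complex.exp (Complex.I * ∑ j, (z j - starRingEnd ℂ (w j)) * (ξ j : ℂ))
        / (m ((2:ℝ) • ξ) : ℂ)) := by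
    apply Measurable.aestronglyMeasurable
    apply Measurable.div
    · apply Continuous.measurable
      apply Complex.continuous_exp.comp
      apply continuous_const.mul
      apply continuous_finset_sum
      intro j _
      exact continuous_const.mul
        (Complex.continuous_ofReal.comp (EuclideanSpace.proj j).continuous)
    · exact Complex.measurable_ofReal.comp
        (hm_meas.measurable.comp ((continuous_const_smul (2:ℝ)).measurable))
  -- dominating function
  set N : ℕ := mm + 2 with hN
  set M : ℝ := max 1 ((N : ℝ) / ε) with hM
  have hM1 : (1:ℝ) ≤ M := le_max_left _ _
  have hMε : (N : ℝ) / ε ≤ M := le_max_right _ _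
  have hNpos : (0:ℝ) < N := by positivity
  have hdom : ∀ u : ℝ, 0 ≤ u → Real.exp (-(ε * u)) ≤ M ^ N * (1 + u) ^ (-(N:ℝ)) := by
    intro u hu
    have h1u : (0:ℝ) < 1 + u := by linarith
    rw [Real.rpow_neg h1u.le, Real.rpow_natCast, ← div_eq_mul_inv,
      le_div_iff₀ (by positivity)]
    have hkey : 1 + u ≤ M * Real.exp (ε * u / N) := by
      have he1 : ε * u / N + 1 ≤ Real.exp (ε * u / N) := Real.add_one_le_exp _
      have hMu : u ≤ M * (ε * u / N) := by
        calc u = ((N:ℝ) / ε) * (ε * u / N) := by field_simp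
          _ ≤ M * (ε * u / N) := mul_le_mul_of_nonneg_right hMε (by positivity)
      nlinarith
    have hpow : (1 + u) ^ N ≤ (M * Real.exp (ε * u / N)) ^ N :=
      pow_le_pow_left₀ h1u.le hkey N
    have hexpN : (Real.exp (ε * u / N)) ^ N = Real.exp (ε * u) := by
      rw [← Real.exp_nat_mul]
      congr 1
      field_simp
    calc Real.exp (-(ε * u)) * (1 + u) ^ N
        ≤ Real.exp (-(ε * u)) * (M * Real.exp (ε * u / N)) ^ N := by
          apply mul_le_mul_of_nonneg_left hpow (Real.exp_nonneg _)
      _ = M ^ N * (Real.exp (-(ε * u)) * Real.exp (ε * u)) := by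
          rw [mul_pow, hexpN]; ring
      _ = M ^ N := by rw [← Real.exp_add, neg_add_cancel, Real.exp_zero, mul_one]
  have hint : Integrable (fun ξ : (EuclideanSpace ℝ (Fin (mm + 1))) => (1 / c₀) * (M ^ N * (1 + ‖ξ‖) ^ (-(N:ℝ)))) := by
    apply Integrable.const_mul
    apply Integrable.const_mul
    apply integrable_one_add_norm
    rw [finrank_euclideanSpace_fin, hN]
    push_cast; linarith
  -- conclusion
  apply Integrable.mono' hint hmeasf
  filter_upwards with ξ
  have hre : (Complex.I * ∑ j, (z j - starRingEnd ℂ (w j)) * (ξ j : ℂ)).re = -⟪a, ξ⟫ := by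
    have hip : ⟪a, ξ⟫ = ∑ j, ((z j).im + (w j).im) * ξ j := by
      simp [PiLp.inner_apply, RCLike.inner_apply, conj_trivial, ha]
      exact Finset.sum_congr rfl fun _ _ => mul_comm _ _
    rw [hip,
      show (Complex.I * ∑ j, (z j - starRingEnd ℂ (w j)) * (ξ j : ℂ)).re
        = -(∑ j, (z j - starRingEnd ℂ (w j)) * (ξ j : ℂ)).im by simp [Complex.mul_re],
      Complex.im_sum]
    congr 1
    apply Finset.sum_congr rfl
    intro j _
    simp [Complex.mul_im]
  have hnorm : ‖Complex.exp (Complex.I * ∑ j, (z j - starRingEnd ℂ (w j)) * (ξ j : ℂ))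
      / (m ((2:ℝ) • ξ) : ℂ)‖ = Real.exp (-⟪a, ξ⟫) / m ((2:ℝ) • ξ) := by
    rw [norm_div, Complex.norm_exp, hre, Complex.norm_real,
      Real.norm_eq_abs, abs_of_pos (hmpos ξ)]
  rw [hnorm]
  have h1 : Real.exp (-⟪a, ξ⟫) ≤ Real.exp (‖a‖ * ‖ξ‖) := by
    apply Real.exp_le_exp.2
    have h2 := abs_real_inner_le_norm a ξ
    have := neg_le_abs ⟪a, ξ⟫
    linarith [neg_abs_le ⟪a, ξ⟫, abs_nonneg ⟪a, ξ⟫, (abs_le.1 h2).1]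
  have h2 : c₀ * Real.exp (2 * t * ‖ξ‖) ≤ m ((2:ℝ) • ξ) := hlow ξ
  calc Real.exp (-⟪a, ξ⟫) / m ((2:ℝ) • ξ)
      ≤ Real.exp (‖a‖ * ‖ξ‖) / (c₀ * Real.exp (2 * t * ‖ξ‖)) :=
        div_le_div₀ (Real.exp_nonneg _) h1 (by positivity) h2
    _ = (1 / c₀) * Real.exp (‖a‖ * ‖ξ‖ - 2 * t * ‖ξ‖) := by
        rw [Real.exp_sub]
        have h₁ : c₀ ≠ 0 := hc₀pos.ne'
        have h₂ : Real.exp (2 * t * ‖ξ‖) ≠ 0 := (Real.exp_pos _).ne'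
        field_simp
    _ = (1 / c₀) * Real.exp (-(ε * ‖ξ‖)) := by
        congr 1
        rw [show ‖a‖ * ‖ξ‖ - 2 * t * ‖ξ‖ = (‖a‖ - 2 * t) * ‖ξ‖ by ring, h2t]
        ring
    _ ≤ (1 / c₀) * (M ^ N * (1 + ‖ξ‖) ^ (-(N:ℝ))) := by
        apply mul_le_mul_of_nonneg_left (hdom ‖ξ‖ (norm_nonneg ξ)) (by positivity)
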